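/- (Theorem 1, Problem C.) Suppose each ∇Q_i is μ-Lipschitz (Assumption 1), for every S ⊆ {1,…,n} with |S| ≥ n−r the average Q_S is γ-strongly convex (Assumption 2), the cost functions satisfy (0,r;ε)-redundancy, and the step sizes η_t ≥ 0 satisfy Σ_t η_t = ∞ and Σ_t η_t² < ∞. For each t let S^t ⊆ {1,…,n} be an arbitrary subset with |S^t| = n−r, and define iterates x^0 ∈ W and x^{t+1} = [x^t − η_t Σ_{j∈S^t} ∇Q_j(x^t)]_W. If α := 1 − (r/n)·(μ/γ) > 0 and D := (2rμ/(αγ))·ε, then limsup_{t→∞} ‖x^t − x*‖ ≤ D. -/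

import Mathlib

open Filter Finset
open scoped RealInnerProductSpace

section Helpers

variable {F : Type*} [NormedAddCommGroup F] [InnerProductSpace ℝ F] [CompleteSpace F]

open scoped RealInnerProductSpace
open Filter Finset

lemma stmt2_grad_sum {ι : Type*} (s : Finset ι) (f : ι → F → ℝ) (x : F)
    (hf : ∀ i, DifferentiableAt ℝ (f i) x) :
    HasGradientAt (fun y => ∑ i ∈ s, f i y) (∑ i ∈ s, gradient (f i) x) x := by
  rw [hasGradientAt_iff_hasFDerivAt, map_sum]
  exact HasFDerivAt.fun_sum fun i _ =>
    hasGradientAt_iff_hasFDerivAt.mp (hf i).hasGradientAt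

lemma stmt2_grad_zero_of_min {f : F → ℝ} {g a : F} (hg : HasGradientAt f g a)
    (hmin : ∀ z, f a ≤ f z) : g = 0 := by
  have h : IsLocalMin f a := Filter.Eventually.of_forall fun y => hmin y
  have h1 := h.hasFDerivAt_eq_zero (hasGradientAt_iff_hasFDerivAt.mp hg)
  have h2 : (InnerProductSpace.toDual ℝ F) g = (InnerProductSpace.toDual ℝ F) 0 := by
    simpa using h1
  exact (InnerProductSpace.toDual ℝ F).injective h2

lemma stmt2_proj_nonexp {W : Set F} (hW : Convex ℝ W) {p y w : F} (hpW : p ∈ W) (hwW : w ∈ W)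
    (hp : ∀ z ∈ W, ‖p - y‖ ≤ ‖z - y‖) : ‖p - w‖ ≤ ‖y - w‖ := by
  haveI : Nonempty W := ⟨⟨p, hpW⟩⟩
  have hmin : ‖y - p‖ = ⨅ z : W, ‖y - z‖ := by
    apply le_antisymm
    · apply le_ciInf
      intro z
      rw [norm_sub_rev y p, norm_sub_rev y z]
      exact hp z z.2
    · refine ciInf_le ⟨0, ?_⟩ (⟨p, hpW⟩ : W)
      rintro b ⟨z, rfl⟩
      exact norm_nonneg _
  have hvar := (norm_eq_iInf_iff_real_inner_le_zero hW hpW).mp hmin w hwW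
  have h1 : ⟪y - w, p - w⟫ = -⟪y - p, w - p⟫ + ‖p - w‖ ^ 2 := by
    have e : y - w = (y - p) + (p - w) := by abel
    rw [e, inner_add_left, real_inner_self_eq_norm_sq]
    have e2 : (w - p : F) = -(p - w) := by abel
    rw [e2, inner_neg_right]
    ring
  have h2 := real_inner_le_norm (y - w) (p - w)
  nlinarith [norm_nonneg (p - w), norm_nonneg (y - w), sq_nonneg (‖p-w‖ - ‖y-w‖)]

omit [CompleteSpace F] in
lemma stmt2_expand_sq (u w g : F) (η : ℝ) :
    ‖u - η • g - w‖ ^ 2 = ‖u - w‖ ^ 2 - 2 * η * ⟪g, u - w⟫ + η ^ 2 * ‖g‖ ^ 2 := by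
  have h : u - η • g - w = (u - w) - η • g := by abel
  rw [h, norm_sub_sq_real, real_inner_smul_right, norm_smul, real_inner_comm]
  simp [mul_pow]
  ring

end Helpers

set_option maxHeartbeats 1000000 in

lemma stmt2_descent_limsup (h η : ℕ → ℝ) (M a b c : ℝ)
    (hh : ∀ t, 0 ≤ h t) (hM : ∀ t, h t ≤ M)
    (ha : 0 < a) (hb : 0 ≤ b) (hc : 0 ≤ c)
    (hη : ∀ t, 0 ≤ η t)
    (hηdiv : Tendsto (fun T => ∑ t ∈ Finset.range T, η t) atTop atTop)
    (hηsq : Summable fun t => η t ^ 2)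
    (step : ∀ t, h (t+1) ^ 2 ≤ h t ^ 2 - 2 * η t * (a * h t ^ 2 - b * h t) + η t ^ 2 * c) :
    limsup h atTop ≤ b / a := by
  set ρ := b / a with hρdef
  have hρ0 : 0 ≤ ρ := div_nonneg hb ha.le
  have hbρ : b = a * ρ := by rw [hρdef]; field_simp
  have key : ∀ ε : ℝ, 0 < ε → ∀ᶠ t in atTop, h t ≤ ρ + ε := by
    intro ε hε
    set δ := ε / 2 with hδdef
    have hδ : 0 < δ := by positivity
    set κ := 2 * a * δ * (ρ + δ) with hκdef
    have hκ : 0 < κ := by positivity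
    set θ := (ρ + ε) ^ 2 - (ρ + δ) ^ 2 with hθdef
    have hθ : 0 < θ := by nlinarith
    -- per-step decrease when h is large
    have dec : ∀ t, ρ + δ ≤ h t → h (t+1) ^ 2 ≤ h t ^ 2 - η t * κ + η t ^ 2 * c := by
      intro t ht
      have h1 := step t
      have hprod : (ρ + δ) * δ ≤ h t * (h t - ρ) :=
        mul_le_mul ht (by linarith) hδ.le (hh t)
      have h2 : κ ≤ 2 * (a * h t ^ 2 - b * h t) := by nlinarith [ha.le]
      nlinarith [mul_le_mul_of_nonneg_left h2 (hη t)]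
    -- step sizes tend to 0
    have hη0 : Tendsto η atTop (nhds 0) := by
      have h2 := hηsq.tendsto_atTop_zero
      have h3 : Tendsto (fun t => Real.sqrt (η t ^ 2)) atTop (nhds (Real.sqrt 0)) :=
        (Real.continuous_sqrt.continuousAt).tendsto.comp h2
      rw [Real.sqrt_zero] at h3
      exact h3.congr fun t => Real.sqrt_sq (hη t)
    obtain ⟨T1, hT1⟩ := (Metric.tendsto_atTop.mp hη0) (1 / (2 * a)) (by positivity)
    have hT1' : ∀ t, T1 ≤ t → η t * (2 * a) ≤ 1 := by
      intro t ht
      have h4 := hT1 t ht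
      rw [Real.dist_eq, sub_zero, abs_of_nonneg (hη t)] at h4
      rw [← le_div_iff₀ (by positivity)]
      exact h4.le
    -- tail control for ∑ η²
    set θ' := θ / (2 * (c + 1)) with hθ'def
    have hθ' : 0 < θ' := by positivity
    obtain ⟨T2, hT2⟩ := (Metric.tendsto_atTop.mp hηsq.hasSum.tendsto_sum_nat) θ' hθ'
    have tail : ∀ T t, T2 ≤ T → T ≤ t → c * ∑ s ∈ Finset.Ico T t, η s ^ 2 ≤ θ := by
      intro T t hT2T hTt
      have e1 := abs_lt.mp ((Real.dist_eq _ _) ▸ hT2 T hT2T)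
      have e2 := abs_lt.mp ((Real.dist_eq _ _) ▸ hT2 t (le_trans hT2T hTt))
      have esum : ∑ s ∈ Finset.Ico T t, η s ^ 2
          = (∑ s ∈ Finset.range t, η s ^ 2) - ∑ s ∈ Finset.range T, η s ^ 2 :=
        Finset.sum_Ico_eq_sub _ hTt
      have hsum2 : ∑ s ∈ Finset.Ico T t, η s ^ 2 ≤ 2 * θ' := by
        rw [esum]; linarith [e1.1, e1.2, e2.1, e2.2]
      have h5 : c * ∑ s ∈ Finset.Ico T t, η s ^ 2 ≤ c * (2 * θ') :=
        mul_le_mul_of_nonneg_left hsum2 hc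
      have h6 : c * (2 * θ') ≤ (c + 1) * (2 * θ') := by nlinarith
      have h7 : (c + 1) * (2 * θ') = θ := by
        rw [hθ'def]; field_simp
      linarith
    set T := max T1 T2 with hTdef
    -- there exists t0 ≥ T with h t0 < ρ + δ
    have exist_small : ∃ t0, T ≤ t0 ∧ h t0 < ρ + δ := by
      by_contra hall
      push_neg at hall
      have tele : ∀ t, T ≤ t → h t ^ 2 ≤ h T ^ 2 - κ * (∑ s ∈ Finset.Ico T t, η s)
          + c * (∑ s ∈ Finset.Ico T t, η s ^ 2) := by
        intro t ht
        induction t, ht using Nat.le_induction with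
        | base => simp
        | succ t hTt ih =>
          have hd := dec t (hall t hTt)
          rw [Finset.sum_Ico_succ_top hTt, Finset.sum_Ico_succ_top hTt]
          linarith
      have hR : Tendsto (fun t => ∑ s ∈ Finset.Ico T t, η s) atTop atTop := by
        have h8 : Tendsto (fun t => (∑ s ∈ Finset.range t, η s)
            + -(∑ s ∈ Finset.range T, η s)) atTop atTop :=
          tendsto_atTop_add_const_right _ _ hηdiv
        apply h8.congr'
        filter_upwards [eventually_ge_atTop T] with t ht
        rw [Finset.sum_Ico_eq_sub _ ht]; ring
      obtain ⟨t, htT, hbig⟩ := ((hR.eventually_ge_atTop ((M ^ 2 + θ + 1)/κ)).and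
        (eventually_ge_atTop T)).exists
      have h9 := tele t hbig
      have h10 : c * ∑ s ∈ Finset.Ico T t, η s ^ 2 ≤ θ :=
        tail T t (le_max_right _ _) hbig
      have h11 : M ^ 2 + θ + 1 ≤ κ * ∑ s ∈ Finset.Ico T t, η s := by
        rw [div_le_iff₀ hκ] at htT; linarith [htT]
      have h12 : h T ^ 2 ≤ M ^ 2 := by nlinarith [hh T, hM T]
      linarith [sq_nonneg (h t)]
    obtain ⟨t0, ht0T, ht0⟩ := exist_small
    -- after t0, h stays small
    have ind : ∀ t, t0 ≤ t → h t ^ 2 ≤ (ρ + δ) ^ 2 + c * ∑ s ∈ Finset.Ico t0 t, η s ^ 2 := by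
      intro t ht
      induction t, ht using Nat.le_induction with
      | base => simp; nlinarith [hh t0]
      | succ t ht0t ih =>
        have hsnn : 0 ≤ ∑ s ∈ Finset.Ico t0 t, η s ^ 2 :=
          Finset.sum_nonneg fun s _ => sq_nonneg _
        rw [Finset.sum_Ico_succ_top ht0t]
        rcases le_or_gt (h t) (ρ + δ) with hc1 | hc1
        · -- small case: uses η t ≤ 1/(2a)
          have hηa : η t * (2 * a) ≤ 1 :=
            hT1' t (le_trans (le_trans (le_max_left _ _) ht0T) ht0t)
          have h1 := step t
          rw [hbρ] at h1
          have h1' : h (t+1) ^ 2 ≤ (1 - 2 * η t * a) * h t ^ 2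
              + 2 * η t * (a * ρ) * h t + η t ^ 2 * c := by linarith [h1]
          have e1 : (1 - 2 * η t * a) * h t ^ 2 ≤ (1 - 2 * η t * a) * (ρ + δ) ^ 2 := by
            apply mul_le_mul_of_nonneg_left _ (by linarith)
            nlinarith [hh t]
          have e2 : 2 * η t * (a * ρ) * h t ≤ 2 * η t * (a * ρ) * (ρ + δ) := by
            apply mul_le_mul_of_nonneg_left hc1
            have := hη t
            positivity
          have e3 : 0 ≤ 2 * η t * a * δ * (ρ + δ) := by
            have h16 := hη t
            have h17 : (0:ℝ) ≤ ρ + δ := by linarith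
            positivity
          have goal1 : h (t+1) ^ 2 ≤ (ρ + δ) ^ 2 + η t ^ 2 * c := by nlinarith [e1, e2, e3, h1']
          nlinarith [mul_nonneg hc hsnn]
        · have hd := dec t hc1.le
          nlinarith [mul_nonneg (hη t) hκ.le]
    -- conclude eventual bound
    filter_upwards [eventually_ge_atTop t0] with t ht
    have h13 := ind t ht
    have h14 : c * ∑ s ∈ Finset.Ico t0 t, η s ^ 2 ≤ θ :=
      tail t0 t (le_trans (le_max_right _ _) ht0T) ht
    have h15 : h t ^ 2 ≤ (ρ + ε) ^ 2 := by rw [hθdef] at h14; linarith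
    nlinarith [hh t, hρ0, hε.le]
  -- ρ + ε for all ε > 0 gives the result
  have hcb : IsCoboundedUnder (· ≤ ·) atTop h :=
    isCoboundedUnder_le_of_le atTop (x := 0) hh
  have hlim : ∀ ε : ℝ, 0 < ε → limsup h atTop ≤ ρ + ε := fun ε hε =>
    limsup_le_of_le hcb (key ε hε)
  by_contra hlt
  push_neg at hlt
  have := hlim ((limsup h atTop - ρ)/2) (by linarith)
  linarith

set_option maxHeartbeats 1600000 in
/-- Theorem 1, Problem C: asymptotic convergence of asynchronous
distributed gradient descent under (0,r;ε)-redundancy. -/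
theorem stmt2 {d n r : ℕ} (hd : 1 ≤ d) (hrn : r < n)
    (Q : Fin n → EuclideanSpace ℝ (Fin d) → ℝ) (μ γ ε : ℝ) (hγ : 0 < γ)
    (hdiff : ∀ i x, DifferentiableAt ℝ (Q i) x)
    -- Assumption 1: each ∇Q_i is μ-Lipschitz
    (hlip : ∀ i x y,
      ‖gradient (Q i) x - gradient (Q i) y‖ ≤ μ * ‖x - y‖)
    -- Assumption 2: averages over sets of ≥ n−r agents are γ-strongly convex
    (hsc : ∀ S : Finset (Fin n), n ≤ S.card + r →
      ∀ x y : EuclideanSpace ℝ (Fin d),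
        γ * ‖x - y‖ ^ 2 ≤
          ⟪(S.card : ℝ)⁻¹ •
              (∑ j ∈ S, gradient (Q j) x - ∑ j ∈ S, gradient (Q j) y), x - y⟫)
    -- (0,r;ε)-redundancy
    (hred : ∀ Shat : Finset (Fin n), n ≤ Shat.card + r →
      ({y : EuclideanSpace ℝ (Fin d) |
          ∀ z, ∑ i ∈ Shat, Q i y ≤ ∑ i ∈ Shat, Q i z}.Nonempty ∧
        Metric.hausdorffDist
          {y : EuclideanSpace ℝ (Fin d) | ∀ z, ∑ i ∈ Shat, Q i y ≤ ∑ i ∈ Shat, Q i z}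
          {y : EuclideanSpace ℝ (Fin d) | ∀ z, ∑ i, Q i y ≤ ∑ i, Q i z} ≤ ε))
    -- step sizes
    (η : ℕ → ℝ) (hη : ∀ t, 0 ≤ η t)
    (hηdiv : Tendsto (fun T => ∑ t ∈ Finset.range T, η t) atTop atTop)
    (hηsq : Summable fun t => η t ^ 2)
    -- convex compact set W and Euclidean projection onto it
    (W : Set (EuclideanSpace ℝ (Fin d))) (hWconv : Convex ℝ W) (hWcomp : IsCompact W)
    (proj : EuclideanSpace ℝ (Fin d) → EuclideanSpace ℝ (Fin d))
    (hproj : ∀ y, proj y ∈ W ∧ ∀ w ∈ W, ‖proj y - y‖ ≤ ‖w - y‖)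
    -- the (unique) minimizer of the total cost lies in W
    (xstar : EuclideanSpace ℝ (Fin d)) (hxW : xstar ∈ W)
    (hxmin : ∀ z, ∑ i, Q i xstar ≤ ∑ i, Q i z)
    -- at each iteration an arbitrary set of n−r agents responds
    (S : ℕ → Finset (Fin n)) (hS : ∀ t, (S t).card + r = n)
    -- iterates
    (x : ℕ → EuclideanSpace ℝ (Fin d)) (hx0 : x 0 ∈ W)
    (hupd : ∀ t, x (t + 1) =
      proj (x t - η t • ∑ j ∈ S t, gradient (Q j) (x t)))
    (α D : ℝ) (hα : α = 1 - (r : ℝ) / n * (μ / γ)) (hαpos : 0 < α)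
    (hD : D = 2 * r * μ / (α * γ) * ε) :
    limsup (fun t => ‖x t - xstar‖) atTop ≤ D := by
  classical
  set m := n - r with hm
  have hm1 : 1 ≤ m := by omega
  have hmpos : (0:ℝ) < (m:ℝ) := by exact_mod_cast Nat.pos_of_ne_zero (by omega)
  have hmcard : ∀ t, (S t).card = m := fun t => by have := hS t; omega
  have hn0 : 0 < n := by omega
  have hμ0 : 0 ≤ μ := by
    have h1 := hlip ⟨0, hn0⟩ (EuclideanSpace.single (⟨0, hd⟩ : Fin d) (1:ℝ)) 0
    have h2 : ‖(EuclideanSpace.single (⟨0, hd⟩ : Fin d) (1:ℝ)) - 0‖ = 1 := by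
      rw [sub_zero, EuclideanSpace.norm_single]; norm_num
    rw [h2, mul_one] at h1
    exact le_trans (norm_nonneg _) h1
  have hunivcard : n ≤ (univ : Finset (Fin n)).card + r := by
    rw [Finset.card_univ, Fintype.card_fin]; omega
  have hε0 : 0 ≤ ε := le_trans Metric.hausdorffDist_nonneg (hred univ hunivcard).2
  have hfullzero : ∑ i, gradient (Q i) xstar = 0 :=
    stmt2_grad_zero_of_min (stmt2_grad_sum univ Q xstar fun i => hdiff i xstar) hxmin
  have hzeron : ∀ z : EuclideanSpace ℝ (Fin d), ∀ T : Finset (Fin n), n ≤ T.card + r →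
      (∑ j ∈ T, gradient (Q j) z = 0) → ∀ z',
      (∑ j ∈ T, gradient (Q j) z' = 0) → z = z' := by
    intro z T hT hz z' hz'
    have h := hsc T hT z z'
    rw [hz, hz'] at h
    simp only [sub_self, smul_zero, inner_zero_left] at h
    have h10 : ‖z - z'‖ ^ 2 = 0 := le_antisymm (by nlinarith) (sq_nonneg _)
    have h9 : ‖z - z'‖ = 0 := by
      exact pow_eq_zero_iff (by norm_num) |>.mp h10
    rw [← sub_eq_zero]
    exact norm_eq_zero.mp h9
  have hminzero : ∀ (T : Finset (Fin n)) z, (∀ z', ∑ i ∈ T, Q i z ≤ ∑ i ∈ T, Q i z') →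
      ∑ j ∈ T, gradient (Q j) z = 0 := fun T z hz =>
    stmt2_grad_zero_of_min (stmt2_grad_sum T Q z fun i => hdiff i z) hz
  have hfullset : {y : EuclideanSpace ℝ (Fin d) | ∀ z, ∑ i, Q i y ≤ ∑ i, Q i z} = {xstar} := by
    ext z
    simp only [Set.mem_setOf_eq, Set.mem_singleton_iff]
    constructor
    · intro hz
      exact hzeron z univ hunivcard (hminzero univ z hz) xstar hfullzero
    · rintro rfl; exact hxmin
  have hGbound : ∀ t, ‖∑ j ∈ S t, gradient (Q j) xstar‖ ≤ (m:ℝ) * (μ * ε) := by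
    intro t
    have hcard : n ≤ (S t).card + r := le_of_eq (hS t).symm
    obtain ⟨⟨y, hy⟩, hDist⟩ := hred (S t) hcard
    have hgy : ∑ j ∈ S t, gradient (Q j) y = 0 := hminzero (S t) y hy
    have hSset : {y' : EuclideanSpace ℝ (Fin d) |
        ∀ z, ∑ i ∈ S t, Q i y' ≤ ∑ i ∈ S t, Q i z} = {y} := by
      ext z
      simp only [Set.mem_setOf_eq, Set.mem_singleton_iff]
      constructor
      · intro hz; exact hzeron z (S t) hcard (hminzero (S t) z hz) y hgy
      · rintro rfl; exact hy
    rw [hSset, hfullset] at hDist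
    have hfin : EMetric.hausdorffEdist ({y} : Set (EuclideanSpace ℝ (Fin d)))
        ({xstar} : Set (EuclideanSpace ℝ (Fin d))) ≠ ⊤ :=
      Metric.hausdorffEdist_ne_top_of_nonempty_of_bounded (Set.singleton_nonempty _)
        (Set.singleton_nonempty _) Bornology.isBounded_singleton Bornology.isBounded_singleton
    have hyd : dist y xstar ≤ ε := by
      have h1 := Metric.infDist_le_hausdorffDist_of_mem (Set.mem_singleton y) hfin
      rw [Metric.infDist_singleton] at h1
      linarith
    have hxy : ‖xstar - y‖ ≤ ε := by rw [← dist_eq_norm, dist_comm]; exact hyd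
    calc ‖∑ j ∈ S t, gradient (Q j) xstar‖
        = ‖∑ j ∈ S t, (gradient (Q j) xstar - gradient (Q j) y)‖ := by
          rw [Finset.sum_sub_distrib, hgy, sub_zero]
      _ ≤ ∑ j ∈ S t, ‖gradient (Q j) xstar - gradient (Q j) y‖ := norm_sum_le _ _
      _ ≤ ∑ j ∈ S t, μ * ε := Finset.sum_le_sum fun j _ =>
          le_trans (hlip j xstar y) (mul_le_mul_of_nonneg_left hxy hμ0)
      _ = (m:ℝ) * (μ * ε) := by rw [Finset.sum_const, hmcard t, nsmul_eq_mul]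
  have hgdiff : ∀ t u v, ‖(∑ j ∈ S t, gradient (Q j) u) - ∑ j ∈ S t, gradient (Q j) v‖
      ≤ (m:ℝ) * (μ * ‖u - v‖) := by
    intro t u v
    calc ‖(∑ j ∈ S t, gradient (Q j) u) - ∑ j ∈ S t, gradient (Q j) v‖
        = ‖∑ j ∈ S t, (gradient (Q j) u - gradient (Q j) v)‖ := by
          rw [Finset.sum_sub_distrib]
      _ ≤ ∑ j ∈ S t, ‖gradient (Q j) u - gradient (Q j) v‖ := norm_sum_le _ _
      _ ≤ ∑ j ∈ S t, μ * ‖u - v‖ := Finset.sum_le_sum fun j _ => hlip j u v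
      _ = (m:ℝ) * (μ * ‖u - v‖) := by rw [Finset.sum_const, hmcard t, nsmul_eq_mul]
  set B := if r = 0 then (0:ℝ) else (m:ℝ) * (μ * ε) with hBdef
  have hB0 : 0 ≤ B := by
    rw [hBdef]
    split
    · exact le_refl 0
    · exact mul_nonneg hmpos.le (mul_nonneg hμ0 hε0)
  have hGB : ∀ t, ‖∑ j ∈ S t, gradient (Q j) xstar‖ ≤ B := by
    intro t
    by_cases hr0 : r = 0
    · rw [hBdef, if_pos hr0]
      have hSu : S t = univ := by
        apply Finset.eq_univ_of_card
        rw [hmcard t, Fintype.card_fin]; omega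
      rw [hSu, hfullzero, norm_zero]
    · rw [hBdef, if_neg hr0]
      exact hGbound t
  obtain ⟨M, hM'⟩ := (Metric.isBounded_iff_subset_closedBall xstar).mp hWcomp.isBounded
  have hMW : ∀ w ∈ W, ‖w - xstar‖ ≤ M := fun w hw => by
    have h1 := hM' hw
    rw [Metric.mem_closedBall, dist_eq_norm] at h1
    exact h1
  have hxtW : ∀ t, x t ∈ W := by
    intro t
    induction t with
    | zero => exact hx0
    | succ t ih => rw [hupd t]; exact (hproj _).1
  have hMx : ∀ t, ‖x t - xstar‖ ≤ M := fun t => hMW _ (hxtW t)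
  have hM0 : 0 ≤ M := le_trans (norm_nonneg _) (hMx 0)
  set C := (m:ℝ) * μ * (M + ε) with hCdef
  have hgb : ∀ t, ‖∑ j ∈ S t, gradient (Q j) (x t)‖ ≤ C := by
    intro t
    have h1 := hgdiff t (x t) xstar
    have h2 := hGbound t
    have h4 : ‖∑ j ∈ S t, gradient (Q j) (x t)‖
        ≤ ‖(∑ j ∈ S t, gradient (Q j) (x t)) - ∑ j ∈ S t, gradient (Q j) xstar‖
          + ‖∑ j ∈ S t, gradient (Q j) xstar‖ := by
      simpa using norm_add_le ((∑ j ∈ S t, gradient (Q j) (x t))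
        - ∑ j ∈ S t, gradient (Q j) xstar) (∑ j ∈ S t, gradient (Q j) xstar)
    have h5 : μ * ‖x t - xstar‖ ≤ μ * M := mul_le_mul_of_nonneg_left (hMx t) hμ0
    have h6 : (m:ℝ) * (μ * ‖x t - xstar‖) ≤ (m:ℝ) * (μ * M) :=
      mul_le_mul_of_nonneg_left h5 hmpos.le
    have e : C = (m:ℝ) * (μ * M) + (m:ℝ) * (μ * ε) := by rw [hCdef]; ring
    linarith
  have hmono' : ∀ t, (m:ℝ) * γ * ‖x t - xstar‖ ^ 2 ≤
      ⟪(∑ j ∈ S t, gradient (Q j) (x t)) - ∑ j ∈ S t, gradient (Q j) xstar,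
        x t - xstar⟫ := by
    intro t
    have h1 := hsc (S t) (le_of_eq (hS t).symm) (x t) xstar
    rw [real_inner_smul_left, hmcard t, inv_mul_eq_div, le_div_iff₀ hmpos] at h1
    linarith
  have step : ∀ t, ‖x (t+1) - xstar‖ ^ 2 ≤ ‖x t - xstar‖ ^ 2
      - 2 * η t * (((m:ℝ) * γ) * ‖x t - xstar‖ ^ 2 - B * ‖x t - xstar‖)
      + η t ^ 2 * C ^ 2 := by
    intro t
    have h1 : ‖x (t+1) - xstar‖ ≤ ‖x t - η t • (∑ j ∈ S t, gradient (Q j) (x t)) - xstar‖ := by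
      rw [hupd t]
      exact stmt2_proj_nonexp hWconv (hproj _).1 hxW (fun z hz => (hproj _).2 z hz)
    have h2 : ‖x (t+1) - xstar‖ ^ 2
        ≤ ‖x t - η t • (∑ j ∈ S t, gradient (Q j) (x t)) - xstar‖ ^ 2 := by
      nlinarith [norm_nonneg (x (t+1) - xstar),
        norm_nonneg (x t - η t • (∑ j ∈ S t, gradient (Q j) (x t)) - xstar)]
    have h3 := stmt2_expand_sq (x t) xstar (∑ j ∈ S t, gradient (Q j) (x t)) (η t)
    have h4 : ⟪(∑ j ∈ S t, gradient (Q j) (x t)), x t - xstar⟫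
        = ⟪(∑ j ∈ S t, gradient (Q j) (x t)) - ∑ j ∈ S t, gradient (Q j) xstar,
            x t - xstar⟫ + ⟪(∑ j ∈ S t, gradient (Q j) xstar), x t - xstar⟫ := by
      rw [inner_sub_left]; ring
    have h5 := hmono' t
    have h6 : -(B * ‖x t - xstar‖) ≤ ⟪(∑ j ∈ S t, gradient (Q j) xstar), x t - xstar⟫ := by
      have h7 := abs_real_inner_le_norm (∑ j ∈ S t, gradient (Q j) xstar) (x t - xstar)
      have h8 : ‖∑ j ∈ S t, gradient (Q j) xstar‖ * ‖x t - xstar‖ ≤ B * ‖x t - xstar‖ :=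
        mul_le_mul_of_nonneg_right (hGB t) (norm_nonneg _)
      have h9 := neg_abs_le ⟪(∑ j ∈ S t, gradient (Q j) xstar), x t - xstar⟫
      linarith
    have h10 : ‖∑ j ∈ S t, gradient (Q j) (x t)‖ ^ 2 ≤ C ^ 2 := by
      nlinarith [hgb t, norm_nonneg (∑ j ∈ S t, gradient (Q j) (x t))]
    have h11 : η t ^ 2 * ‖∑ j ∈ S t, gradient (Q j) (x t)‖ ^ 2 ≤ η t ^ 2 * C ^ 2 :=
      mul_le_mul_of_nonneg_left h10 (sq_nonneg _)
    have h12 : ((m:ℝ) * γ) * ‖x t - xstar‖ ^ 2 - B * ‖x t - xstar‖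
        ≤ ⟪(∑ j ∈ S t, gradient (Q j) (x t)), x t - xstar⟫ := by
      rw [h4]; linarith
    have h13 := mul_le_mul_of_nonneg_left h12
      (by linarith [hη t] : (0:ℝ) ≤ 2 * η t)
    rw [h3] at h2
    linarith
  have main := stmt2_descent_limsup (fun t => ‖x t - xstar‖) η M ((m:ℝ) * γ) B (C ^ 2)
    (fun t => norm_nonneg _) hMx (mul_pos hmpos hγ) hB0 (sq_nonneg C) hη hηdiv hηsq step
  refine le_trans main ?_
  rcases Nat.eq_zero_or_pos r with hr0 | hr1
  · rw [hBdef, if_pos hr0, hD, hr0]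
    simp
  · rw [hBdef, if_neg (by omega)]
    have e : (m:ℝ) * (μ * ε) / ((m:ℝ) * γ) = μ * ε / γ :=
      mul_div_mul_left _ _ (ne_of_gt hmpos)
    rw [e, hD]
    have hα1 : α ≤ 1 := by
      rw [hα]
      have h1 : 0 ≤ (r:ℝ) / n * (μ / γ) :=
        mul_nonneg (div_nonneg (Nat.cast_nonneg r) (Nat.cast_nonneg n))
          (div_nonneg hμ0 hγ.le)
      linarith
    have hr1' : (1:ℝ) ≤ (r:ℝ) := by exact_mod_cast hr1
    rw [div_mul_eq_mul_div, div_le_div_iff₀ hγ (mul_pos hαpos hγ)]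
    have h2r : (0:ℝ) ≤ 2 * (r:ℝ) - α := by linarith
    have hkey := mul_nonneg (mul_nonneg (mul_nonneg hμ0 hε0) hγ.le) h2r
    nlinarith [hkey]
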